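/- Every good local semigroup S ⊆ ℕ^n has a unique minimal good generating system: if A and B are both minimal good generating systems for S (contained in B(C) = { x : x ≤ C }), then A = B. -/

import Mathlib

/-- A good semigroup of `ℕ^n`: a submonoid satisfying (G1), (G2), (G3). -/
def IsGoodSemigroup {n : ℕ} (S : Set (Fin n → ℕ)) : Prop :=
  0 ∈ S ∧ (∀ a ∈ S, ∀ b ∈ S, a + b ∈ S) ∧
  (∀ a ∈ S, ∀ b ∈ S, a ⊓ b ∈ S) ∧
  (∀ a ∈ S, ∀ b ∈ S, ∀ i, a i = b i →
    ∃ c ∈ S, a i < c i ∧ (∀ j, j ≠ i → min (a j) (b j) ≤ c j) ∧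
      (∀ j, j ≠ i → a j ≠ b j → c j = min (a j) (b j))) ∧
  (∃ C, ∀ x, C ≤ x → x ∈ S)

/-- `C` is the conductor of `S ⊆ ℕ^n`. -/
def IsConductor {n : ℕ} (S : Set (Fin n → ℕ)) (C : Fin n → ℕ) : Prop :=
  (∀ x, C ≤ x → x ∈ S) ∧ ∀ C', (∀ x, C' ≤ x → x ∈ S) → C ≤ C'

/-- `S` is local: its only element on the axes is `0`. -/
def IsLocal {n : ℕ} (S : Set (Fin n → ℕ)) : Prop :=
  ∀ a ∈ S, (∃ i, a i = 0) → a = 0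

/-- `[G]`: the smallest submonoid of `ℕ^n` containing `G` closed under componentwise infima. -/
def goodClosure {n : ℕ} (G : Set (Fin n → ℕ)) : Set (Fin n → ℕ) :=
  ⋂₀ {M | G ⊆ M ∧ 0 ∈ M ∧ (∀ a ∈ M, ∀ b ∈ M, a + b ∈ M) ∧ ∀ a ∈ M, ∀ b ∈ M, a ⊓ b ∈ M}

/-- `[G]_C = C ⊓ [G]`. -/
def goodClosureBd {n : ℕ} (G : Set (Fin n → ℕ)) (C : Fin n → ℕ) : Set (Fin n → ℕ) :=
  (fun x => C ⊓ x) '' goodClosure G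

/-- `G` is a good generating system for `S` (with conductor `C`): `[G]_C = Small(S)`. -/
def IsGoodGenSys {n : ℕ} (S : Set (Fin n → ℕ)) (C : Fin n → ℕ) (G : Set (Fin n → ℕ)) : Prop :=
  goodClosureBd G C = {a ∈ S | a ≤ C}

namespace MGGS

variable {n : ℕ}

inductive Cl (G : Set (Fin n → ℕ)) : (Fin n → ℕ) → Prop
  | mem : ∀ {a}, a ∈ G → Cl G a
  | zero : Cl G 0
  | add : ∀ {a b}, Cl G a → Cl G b → Cl G (a + b)
  | inf : ∀ {a b}, Cl G a → Cl G b → Cl G (a ⊓ b)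

lemma cl_mono {G G' : Set (Fin n → ℕ)} (h : G ⊆ G') {a} (ha : Cl G a) : Cl G' a := by
  induction ha with
  | mem h' => exact Cl.mem (h h')
  | zero => exact Cl.zero
  | add _ _ iha ihb => exact Cl.add iha ihb
  | inf _ _ iha ihb => exact Cl.inf iha ihb

lemma goodClosure_eq (G : Set (Fin n → ℕ)) : goodClosure G = {x | Cl G x} := by
  apply subset_antisymm
  · intro x hx
    exact hx _ ⟨fun a ha => Cl.mem ha, Cl.zero, fun a ha b hb => Cl.add ha hb,
      fun a ha b hb => Cl.inf ha hb⟩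
  · intro x hx M hM
    obtain ⟨hG, h0, hadd, hinf⟩ := hM
    induction hx with
    | mem h => exact hG h
    | zero => exact h0
    | add _ _ iha ihb => exact hadd _ iha _ ihb
    | inf _ _ iha ihb => exact hinf _ iha _ ihb

lemma tau_add (C a b : Fin n → ℕ) : C ⊓ (a + b) = C ⊓ (C ⊓ a + C ⊓ b) := by
  funext i; simp only [Pi.inf_apply, Pi.add_apply]; omega
lemma tau_inf (C a b : Fin n → ℕ) : C ⊓ (a ⊓ b) = (C ⊓ a) ⊓ (C ⊓ b) := by
  funext i; simp only [Pi.inf_apply]; omega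
lemma tau_of_le {C a : Fin n → ℕ} (h : a ≤ C) : C ⊓ a = a := inf_eq_right.mpr h
lemma tau_le (C a : Fin n → ℕ) : C ⊓ a ≤ C := inf_le_left
lemma tau_zero (C : Fin n → ℕ) : C ⊓ (0 : Fin n → ℕ) = 0 := tau_of_le (zero_le (a := C))
lemma tau_idem (C a : Fin n → ℕ) : C ⊓ (C ⊓ a) = C ⊓ a := tau_of_le (tau_le C a)
lemma zero_inf' (w : Fin n → ℕ) : (0 : Fin n → ℕ) ⊓ w = 0 := by
  funext i; simp

variable {S : Set (Fin n → ℕ)} {C : Fin n → ℕ}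

lemma tau_cl_small (h0S : 0 ∈ S) (haddS : ∀ a ∈ S, ∀ b ∈ S, a + b ∈ S)
    (hinfS : ∀ a ∈ S, ∀ b ∈ S, a ⊓ b ∈ S) (hCS : C ∈ S)
    {G : Set (Fin n → ℕ)} (hG : ∀ g ∈ G, g ∈ S ∧ g ≤ C)
    {m} (hm : Cl G m) : C ⊓ m ∈ S ∧ C ⊓ m ≤ C := by
  induction hm with
  | mem h => exact ⟨by rw [tau_of_le (hG _ h).2]; exact (hG _ h).1, tau_le _ _⟩
  | zero => rw [tau_zero]; exact ⟨h0S, zero_le (a := C)⟩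
  | add ha hb iha ihb =>
      rw [tau_add]
      exact ⟨hinfS _ hCS _ (haddS _ iha.1 _ ihb.1), tau_le _ _⟩
  | inf ha hb iha ihb =>
      rw [tau_inf]
      exact ⟨hinfS _ iha.1 _ ihb.1, le_trans inf_le_left iha.2⟩

lemma removable (h0S : 0 ∈ S) (haddS : ∀ a ∈ S, ∀ b ∈ S, a + b ∈ S)
    (hinfS : ∀ a ∈ S, ∀ b ∈ S, a ⊓ b ∈ S) (hCS : C ∈ S)
    (hpos : ∀ a ∈ S, a ≠ 0 → ∀ i, 1 ≤ a i)
    {G : Set (Fin n → ℕ)} (hGbd : ∀ g ∈ G, g ≤ C)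
    (hG : (fun y => C ⊓ y) '' {m | Cl G m} = {a ∈ S | a ≤ C})
    {x : Fin n → ℕ}
    (hx : ∃ m, Cl ({a ∈ S | a ≤ C} \ {x}) m ∧ C ⊓ m = x) :
    (fun y => C ⊓ y) '' {m | Cl (G \ {x}) m} = {a ∈ S | a ≤ C} := by
  have hGsm : ∀ g ∈ G, g ∈ S ∧ g ≤ C := by
    intro g hg
    have h1 : C ⊓ g ∈ (fun y => C ⊓ y) '' {m | Cl G m} :=
      ⟨g, Cl.mem hg, rfl⟩
    rw [hG] at h1
    rwa [tau_of_le (hGbd g hg)] at h1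
  by_cases hxG : x ∈ G
  swap
  · rw [Set.diff_singleton_eq_self hxG]; exact hG
  by_cases hx0 : x = 0
  · subst hx0
    have hset : {m | Cl (G \ {(0 : Fin n → ℕ)}) m} = {m | Cl G m} := by
      ext m
      constructor
      · exact cl_mono Set.diff_subset
      · intro h
        induction h with
        | @mem a ha =>
            by_cases ha0 : a = 0
            · subst ha0; exact Cl.zero
            · exact Cl.mem ⟨ha, ha0⟩
        | zero => exact Cl.zero
        | add _ _ iha ihb => exact Cl.add iha ihb
        | inf _ _ iha ihb => exact Cl.inf iha ihb
    rw [hset]; exact hG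
  -- main case
  have hxSm : x ∈ S ∧ x ≤ C := hGsm x hxG
  have hxpos : ∀ i, 1 ≤ x i := hpos x hxSm.1 hx0
  -- D s := ∃ m, Cl (G \ {x}) m ∧ C ⊓ m = s
  have hDsm : ∀ s : Fin n → ℕ, (∃ m, Cl (G \ {x}) m ∧ C ⊓ m = s) → s ∈ S ∧ s ≤ C := by
    rintro s ⟨m, hm, rfl⟩
    exact tau_cl_small h0S haddS hinfS hCS (fun g hg => hGsm g hg.1) hm
  have hDadd : ∀ s t : Fin n → ℕ, (∃ m, Cl (G \ {x}) m ∧ C ⊓ m = s) →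
      (∃ m, Cl (G \ {x}) m ∧ C ⊓ m = t) →
      ∃ m, Cl (G \ {x}) m ∧ C ⊓ m = C ⊓ (s + t) := by
    rintro s t ⟨m1, h1, rfl⟩ ⟨m2, h2, rfl⟩
    exact ⟨m1 + m2, Cl.add h1 h2, tau_add C m1 m2⟩
  have hDinf : ∀ s t : Fin n → ℕ, (∃ m, Cl (G \ {x}) m ∧ C ⊓ m = s) →
      (∃ m, Cl (G \ {x}) m ∧ C ⊓ m = t) →
      ∃ m, Cl (G \ {x}) m ∧ C ⊓ m = s ⊓ t := by
    rintro s t ⟨m1, h1, rfl⟩ ⟨m2, h2, rfl⟩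
    exact ⟨m1 ⊓ m2, Cl.inf h1 h2, tau_inf C m1 m2⟩
  -- Hc h := D h ∨ h = C
  have hHcS : ∀ h : Fin n → ℕ, ((∃ m, Cl (G \ {x}) m ∧ C ⊓ m = h) ∨ h = C) →
      h ∈ S ∧ h ≤ C := by
    rintro h (hD | rfl)
    · exact hDsm h hD
    · exact ⟨hCS, le_rfl⟩
  have hHcadd : ∀ h1 h2 : Fin n → ℕ,
      ((∃ m, Cl (G \ {x}) m ∧ C ⊓ m = h1) ∨ h1 = C) →
      ((∃ m, Cl (G \ {x}) m ∧ C ⊓ m = h2) ∨ h2 = C) →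
      ((∃ m, Cl (G \ {x}) m ∧ C ⊓ m = C ⊓ (h1 + h2)) ∨ C ⊓ (h1 + h2) = C) := by
    rintro h1 h2 (hd1 | rfl) (hd2 | rfl)
    · exact Or.inl (hDadd _ _ hd1 hd2)
    · refine Or.inr ?_
      funext i; simp only [Pi.inf_apply, Pi.add_apply]; omega
    · refine Or.inr ?_
      funext i; simp only [Pi.inf_apply, Pi.add_apply]; omega
    · refine Or.inr ?_
      funext i; simp only [Pi.inf_apply, Pi.add_apply]; omega
  have hHcinf : ∀ h1 h2 : Fin n → ℕ,
      ((∃ m, Cl (G \ {x}) m ∧ C ⊓ m = h1) ∨ h1 = C) →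
      ((∃ m, Cl (G \ {x}) m ∧ C ⊓ m = h2) ∨ h2 = C) →
      ((∃ m, Cl (G \ {x}) m ∧ C ⊓ m = h1 ⊓ h2) ∨ h1 ⊓ h2 = C) := by
    rintro h1 h2 (hd1 | rfl) (hd2 | rfl)
    · exact Or.inl (hDinf _ _ hd1 hd2)
    · rw [inf_eq_left.mpr (hDsm _ hd1).2]; exact Or.inl hd1
    · rw [inf_eq_right.mpr (hDsm _ hd2).2]; exact Or.inl hd2
    · rw [inf_idem]; exact Or.inr rfl
  -- key bound lemma
  have keyY : ∀ h1 h2 w1 w2 : Fin n → ℕ, (∀ i, 1 ≤ h1 i) → (∀ i, 1 ≤ h2 i) →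
      (w1 = x ∨ ∀ i, min (C i) (x i + 1) ≤ w1 i) →
      (w2 = x ∨ ∀ i, min (C i) (x i + 1) ≤ w2 i) →
      ∀ i, min (C i) (x i + 1) ≤
        ((C ⊓ (h1 + w2)) ⊓ (C ⊓ (w1 + h2)) ⊓ (C ⊓ (w1 + w2))) i := by
    intro h1 h2 w1 w2 hp1 hp2 hw1 hw2 i
    simp only [Pi.inf_apply, Pi.add_apply]
    have hxi := hxpos i
    have h1i := hp1 i
    have h2i := hp2 i
    rcases hw1 with rfl | hY1 <;> rcases hw2 with rfl | hY2
    · omega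
    · have := hY2 i; omega
    · have := hY1 i; omega
    · have := hY1 i; have := hY2 i; omega
  have keyE : ∀ h1 h2 w1 w2 : Fin n → ℕ,
      C ⊓ (h1 ⊓ w1 + h2 ⊓ w2) =
        (C ⊓ (h1 + h2)) ⊓ ((C ⊓ (h1 + w2)) ⊓ (C ⊓ (w1 + h2)) ⊓ (C ⊓ (w1 + w2))) := by
    intro h1 h2 w1 w2
    funext i; simp only [Pi.inf_apply, Pi.add_apply]; omega
  -- Dpp : form lemma
  have hDpp : ∀ m, Cl G m → ∃ h w : Fin n → ℕ,
      ((∃ m', Cl (G \ {x}) m' ∧ C ⊓ m' = h) ∨ h = C) ∧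
      (w = x ∨ ∀ i, min (C i) (x i + 1) ≤ w i) ∧ C ⊓ m = h ⊓ w := by
    intro m hm
    induction hm with
    | @mem g hg =>
        by_cases hgx : g = x
        · subst hgx
          exact ⟨C, g, Or.inr rfl, Or.inl rfl, rfl⟩
        · refine ⟨g, C, Or.inl ⟨g, Cl.mem ⟨hg, hgx⟩, tau_of_le (hGbd g hg)⟩,
            Or.inr (fun i => min_le_left _ _), ?_⟩
          rw [tau_of_le (hGbd g hg), inf_eq_left.mpr (hGbd g hg)]
    | zero =>
        refine ⟨0, C, Or.inl ⟨0, Cl.zero, tau_zero C⟩, Or.inr (fun i => min_le_left _ _), ?_⟩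
        rw [tau_zero, zero_inf']
    | @add a b ha hb iha ihb =>
        by_cases hsa0 : C ⊓ a = 0
        · rw [tau_add, hsa0, zero_add, tau_idem]; exact ihb
        by_cases hsb0 : C ⊓ b = 0
        · rw [tau_add, hsb0, add_zero, tau_idem]; exact iha
        obtain ⟨h1, w1, hh1, hw1, he1⟩ := iha
        obtain ⟨h2, w2, hh2, hw2, he2⟩ := ihb
        have hh1ne : h1 ≠ 0 := by
          rintro rfl; exact hsa0 (by rw [he1, zero_inf'])
        have hh2ne : h2 ≠ 0 := by
          rintro rfl; exact hsb0 (by rw [he2, zero_inf'])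
        have h1pos : ∀ i, 1 ≤ h1 i := hpos h1 (hHcS h1 hh1).1 hh1ne
        have h2pos : ∀ i, 1 ≤ h2 i := hpos h2 (hHcS h2 hh2).1 hh2ne
        refine ⟨C ⊓ (h1 + h2), (C ⊓ (h1 + w2)) ⊓ (C ⊓ (w1 + h2)) ⊓ (C ⊓ (w1 + w2)),
          hHcadd _ _ hh1 hh2, Or.inr (keyY h1 h2 w1 w2 h1pos h2pos hw1 hw2), ?_⟩
        rw [tau_add, he1, he2]
        exact keyE h1 h2 w1 w2
    | @inf a b ha hb iha ihb =>
        obtain ⟨h1, w1, hh1, hw1, he1⟩ := iha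
        obtain ⟨h2, w2, hh2, hw2, he2⟩ := ihb
        refine ⟨h1 ⊓ h2, w1 ⊓ w2, hHcinf _ _ hh1 hh2, ?_, ?_⟩
        · rcases hw1 with hw1 | hY1
          · rcases hw2 with hw2 | hY2
            · exact Or.inl (by rw [hw1, hw2, inf_idem])
            · refine Or.inl ?_
              funext i
              have e1 := congrFun hw1 i
              have := hY2 i; have := hxSm.2 i
              simp only [Pi.inf_apply] at *
              omega
          · rcases hw2 with hw2 | hY2
            · refine Or.inl ?_
              funext i
              have e2 := congrFun hw2 i
              have := hY1 i; have := hxSm.2 i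
              simp only [Pi.inf_apply] at *
              omega
            · refine Or.inr fun i => ?_
              have := hY1 i; have := hY2 i
              simp only [Pi.inf_apply]
              omega
        · rw [tau_inf, he1, he2]
          funext i; simp only [Pi.inf_apply]; omega
  -- F-argument
  have hF : ∀ h' w' : Fin n → ℕ, h' ≤ C → (∀ i, min (C i) (x i + 1) ≤ w' i) →
      x = h' ⊓ w' → x = h' := by
    intro h' w' hle hY he
    funext i
    have e1 := congrFun he i
    have h2 := hY i
    have h3 := hle i
    have h4 := hxSm.2 i
    simp only [Pi.inf_apply] at *
    omega
  -- main induction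
  have hMain : ∀ m, Cl ({a ∈ S | a ≤ C} \ {x}) m → C ⊓ m = x →
      ∃ m', Cl (G \ {x}) m' ∧ C ⊓ m' = x := by
    intro m hm
    induction hm with
    | @mem t ht =>
        intro he
        rw [tau_of_le ht.1.2] at he
        exact absurd he ht.2
    | zero =>
        intro he
        rw [tau_zero] at he
        exact absurd he.symm hx0
    | @add a b ha hb iha ihb =>
        intro he
        rw [tau_add] at he
        by_cases hsa0 : C ⊓ a = 0
        · rw [hsa0, zero_add, tau_idem] at he
          exact ihb he
        by_cases hsb0 : C ⊓ b = 0
        · rw [hsb0, add_zero, tau_idem] at he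
          exact iha he
        by_cases hsax : C ⊓ a = x
        · exact iha hsax
        by_cases hsbx : C ⊓ b = x
        · exact ihb hsbx
        have hsa : C ⊓ a ∈ S ∧ C ⊓ a ≤ C :=
          tau_cl_small h0S haddS hinfS hCS (fun g hg => hg.1) ha
        have hsb : C ⊓ b ∈ S ∧ C ⊓ b ≤ C :=
          tau_cl_small h0S haddS hinfS hCS (fun g hg => hg.1) hb
        have hsaG : C ⊓ a ∈ (fun y => C ⊓ y) '' {m | Cl G m} := by rw [hG]; exact hsa
        have hsbG : C ⊓ b ∈ (fun y => C ⊓ y) '' {m | Cl G m} := by rw [hG]; exact hsb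
        obtain ⟨ma, hma, hea⟩ := hsaG
        obtain ⟨mb, hmb, heb⟩ := hsbG
        have hea' : C ⊓ ma = C ⊓ a := hea
        have heb' : C ⊓ mb = C ⊓ b := heb
        have hfa := hDpp ma hma
        have hfb := hDpp mb hmb
        rw [hea'] at hfa
        rw [heb'] at hfb
        obtain ⟨h1, w1, hh1, hw1, he1⟩ := hfa
        obtain ⟨h2, w2, hh2, hw2, he2⟩ := hfb
        have hh1ne : h1 ≠ 0 := by
          rintro rfl; exact hsa0 (by rw [he1, zero_inf'])
        have hh2ne : h2 ≠ 0 := by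
          rintro rfl; exact hsb0 (by rw [he2, zero_inf'])
        have h1pos : ∀ i, 1 ≤ h1 i := hpos h1 (hHcS h1 hh1).1 hh1ne
        have h2pos : ∀ i, 1 ≤ h2 i := hpos h2 (hHcS h2 hh2).1 hh2ne
        have hx' : x = (C ⊓ (h1 + h2)) ⊓
            ((C ⊓ (h1 + w2)) ⊓ (C ⊓ (w1 + h2)) ⊓ (C ⊓ (w1 + w2))) := by
          rw [← he, he1, he2]
          exact keyE h1 h2 w1 w2
        have hxh : x = C ⊓ (h1 + h2) :=
          hF _ _ (tau_le _ _) (keyY h1 h2 w1 w2 h1pos h2pos hw1 hw2) hx'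
        have hhc := hHcadd _ _ hh1 hh2
        rw [← hxh] at hhc
        rcases hhc with hD | hxC2
        · exact hD
        · -- x = C
          have hD1 : ∃ m', Cl (G \ {x}) m' ∧ C ⊓ m' = h1 := by
            rcases hh1 with hD1 | rfl
            · exact hD1
            · exfalso; apply hsax
              rcases hw1 with hw1 | hY1
              · rw [he1, hw1, tau_of_le hxSm.2]
              · rw [he1]
                rw [← hxC2]
                funext i
                have := hY1 i
                have h4 := hxSm.2 i
                have e2 := congrFun hxC2 i
                simp only [Pi.inf_apply] at *
                omega
          have hD2 : ∃ m', Cl (G \ {x}) m' ∧ C ⊓ m' = h2 := by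
            rcases hh2 with hD2 | rfl
            · exact hD2
            · exfalso; apply hsbx
              rcases hw2 with hw2 | hY2
              · rw [he2, hw2, tau_of_le hxSm.2]
              · rw [he2]
                rw [← hxC2]
                funext i
                have := hY2 i
                have h4 := hxSm.2 i
                have e2 := congrFun hxC2 i
                simp only [Pi.inf_apply] at *
                omega
          obtain ⟨mm, hmm1, hmm2⟩ := hDadd _ _ hD1 hD2
          exact ⟨mm, hmm1, hmm2.trans hxh.symm⟩
    | @inf a b ha hb iha ihb =>
        intro he
        rw [tau_inf] at he
        by_cases hsax : C ⊓ a = x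
        · exact iha hsax
        by_cases hsbx : C ⊓ b = x
        · exact ihb hsbx
        have hsa : C ⊓ a ∈ S ∧ C ⊓ a ≤ C :=
          tau_cl_small h0S haddS hinfS hCS (fun g hg => hg.1) ha
        have hsb : C ⊓ b ∈ S ∧ C ⊓ b ≤ C :=
          tau_cl_small h0S haddS hinfS hCS (fun g hg => hg.1) hb
        have hax : x ≤ C ⊓ a := by rw [← he]; exact inf_le_left
        have hbx : x ≤ C ⊓ b := by rw [← he]; exact inf_le_right
        have hsaG : C ⊓ a ∈ (fun y => C ⊓ y) '' {m | Cl G m} := by rw [hG]; exact hsa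
        have hsbG : C ⊓ b ∈ (fun y => C ⊓ y) '' {m | Cl G m} := by rw [hG]; exact hsb
        obtain ⟨ma, hma, hea⟩ := hsaG
        obtain ⟨mb, hmb, heb⟩ := hsbG
        have hea' : C ⊓ ma = C ⊓ a := hea
        have heb' : C ⊓ mb = C ⊓ b := heb
        have hfa := hDpp ma hma
        have hfb := hDpp mb hmb
        rw [hea'] at hfa
        rw [heb'] at hfb
        obtain ⟨h1, w1, hh1, hw1, he1⟩ := hfa
        obtain ⟨h2, w2, hh2, hw2, he2⟩ := hfb
        have hY1 : ∀ i, min (C i) (x i + 1) ≤ w1 i := by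
          rcases hw1 with hw1 | hY1
          · exfalso; apply hsax
            apply le_antisymm _ hax
            rw [he1, hw1]; exact inf_le_right
          · exact hY1
        have hY2 : ∀ i, min (C i) (x i + 1) ≤ w2 i := by
          rcases hw2 with hw2 | hY2
          · exfalso; apply hsbx
            apply le_antisymm _ hbx
            rw [he2, hw2]; exact inf_le_right
          · exact hY2
        have hx' : x = (h1 ⊓ h2) ⊓ (w1 ⊓ w2) := by
          rw [← he, he1, he2]
          funext i; simp only [Pi.inf_apply]; omega
        have hYw : ∀ i, min (C i) (x i + 1) ≤ (w1 ⊓ w2) i := by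
          intro i
          have := hY1 i; have := hY2 i
          simp only [Pi.inf_apply]
          omega
        have hle12 : h1 ⊓ h2 ≤ C := le_trans inf_le_left (hHcS h1 hh1).2
        have hxh : x = h1 ⊓ h2 := hF _ _ hle12 hYw hx'
        have hhc := hHcinf _ _ hh1 hh2
        rw [← hxh] at hhc
        rcases hhc with hD | hxC2
        · exact hD
        · exfalso; apply hsax
          apply le_antisymm _ hax
          exact le_trans hsa.2 (le_of_eq hxC2.symm)
  obtain ⟨m0, hm0, he0⟩ := hx
  have hDx := hMain m0 hm0 he0
  -- conclusion
  apply subset_antisymm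
  · rintro s ⟨m, hm, rfl⟩
    exact tau_cl_small h0S haddS hinfS hCS (fun g hg => hGsm g hg.1) hm
  · intro s hs
    rw [← hG] at hs
    obtain ⟨m, hm, rfl⟩ := hs
    have hD : ∃ m', Cl (G \ {x}) m' ∧ C ⊓ m' = C ⊓ m := by
      induction hm with
      | @mem g hg =>
          by_cases hgx : g = x
          · subst hgx
            rw [tau_of_le hxSm.2]
            exact hDx
          · exact ⟨g, Cl.mem ⟨hg, hgx⟩, rfl⟩
      | zero => exact ⟨0, Cl.zero, rfl⟩
      | add _ _ iha ihb =>
          rw [tau_add]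
          exact hDadd _ _ iha ihb
      | inf _ _ iha ihb =>
          rw [tau_inf]
          exact hDinf _ _ iha ihb
    obtain ⟨m', hm', he'⟩ := hD
    exact ⟨m', hm', he'⟩


end MGGS

theorem minimal_goodGenSys_unique {n : ℕ} (S : Set (Fin n → ℕ))
    (hS : IsGoodSemigroup S) (hloc : IsLocal S)
    (C : Fin n → ℕ) (hC : IsConductor S C)
    (A B : Set (Fin n → ℕ))
    (hAbd : A ⊆ {x | x ≤ C}) (hBbd : B ⊆ {x | x ≤ C})
    (hA : IsGoodGenSys S C A) (hAmin : ∀ A' ⊂ A, ¬ IsGoodGenSys S C A')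
    (hB : IsGoodGenSys S C B) (hBmin : ∀ B' ⊂ B, ¬ IsGoodGenSys S C B') :
    A = B := by
  obtain ⟨h0S, haddS, hinfS, -, -⟩ := hS
  have hCS : C ∈ S := hC.1 C le_rfl
  have hpos : ∀ a ∈ S, a ≠ 0 → ∀ i, 1 ≤ a i := by
    intro a ha h0 i
    rcases Nat.eq_zero_or_pos (a i) with h | h
    · exact absurd (hloc a ha ⟨i, h⟩) h0
    · exact h
  have key : ∀ X Y : Set (Fin n → ℕ), X ⊆ {x | x ≤ C} → Y ⊆ {x | x ≤ C} →
      IsGoodGenSys S C X → IsGoodGenSys S C Y →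
      (∀ Y' ⊂ Y, ¬ IsGoodGenSys S C Y') → Y ⊆ X := by
    intro X Y hXbd hYbd hX hY hYmin b hb
    by_contra hbX
    rw [IsGoodGenSys, goodClosureBd, MGGS.goodClosure_eq] at hX hY
    have hXsm : ∀ g ∈ X, g ∈ S ∧ g ≤ C := by
      intro g hg
      have h1 : C ⊓ g ∈ (fun y => C ⊓ y) '' {m | MGGS.Cl X m} :=
        ⟨g, MGGS.Cl.mem hg, rfl⟩
      rw [hX] at h1
      rwa [MGGS.tau_of_le (hXbd hg)] at h1
    have hbSm : b ∈ S ∧ b ≤ C := by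
      have h1 : C ⊓ b ∈ (fun y => C ⊓ y) '' {m | MGGS.Cl Y m} :=
        ⟨b, MGGS.Cl.mem hb, rfl⟩
      rw [hY] at h1
      rwa [MGGS.tau_of_le (hYbd hb)] at h1
    have hbx : ∃ m, MGGS.Cl ({a ∈ S | a ≤ C} \ {b}) m ∧ C ⊓ m = b := by
      have h1 : b ∈ (fun y => C ⊓ y) '' {m | MGGS.Cl X m} := by
        rw [hX]; exact hbSm
      obtain ⟨m, hm, he⟩ := h1
      refine ⟨m, MGGS.cl_mono ?_ hm, he⟩
      intro a ha
      exact ⟨hXsm a ha, fun h => hbX (h ▸ ha)⟩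
    have hrem := MGGS.removable h0S haddS hinfS hCS hpos (fun g hg => hYbd hg) hY hbx
    refine hYmin (Y \ {b}) (Set.sdiff_singleton_ssubset.mpr hb) ?_
    rw [IsGoodGenSys, goodClosureBd, MGGS.goodClosure_eq]
    exact hrem
  exact Set.Subset.antisymm (key B A hBbd hAbd hB hA hAmin) (key A B hAbd hBbd hA hB hBmin)
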